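/- Let M be a non-commutative magma (set with a binary operation) whose center Z(M) = {z ∈ M : zm = mz for all m ∈ M} is non-empty. Then the countable direct power M^∞ is not q-compact. -/
import Mathlib


/-- Terms in one binary operation, with constants from the magma `M`. -/
inductive MagTerm (M : Type) (n : ℕ) where
  | var : Fin n → MagTerm M n
  | const : M → MagTerm M n
  | mul : MagTerm M n → MagTerm M n → MagTerm M n

def MagTerm.eval {M : Type} [Mul M] {n : ℕ} (v : Fin n → M) : MagTerm M n → M
  | .var i => v i
  | .const m => m
  | .mul t s => t.eval v * s.eval v

def SolSet {M : Type} [Mul M] {n : ℕ} (S : Set (MagTerm M n × MagTerm M n)) :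
    Set (Fin n → M) :=
  {v | ∀ e ∈ S, e.1.eval v = e.2.eval v}

/-- A magma `H` is q-compact if whenever the solution set of a system of equations
with constants from `H` is contained in that of a single equation, some finite
subsystem already has its solution set contained in that of the equation. -/
def QCompact (H : Type) [Mul H] : Prop :=
  ∀ (n : ℕ) (S : Set (MagTerm H n × MagTerm H n)) (e : MagTerm H n × MagTerm H n),
    SolSet S ⊆ SolSet {e} → ∃ S' ⊆ S, S'.Finite ∧ SolSet S' ⊆ SolSet {e}

open Classical in
/-- For a non-commutative magma `M` with non-empty center, the countable direct power
`M^∞` is not q-compact. -/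
theorem magma_power_not_qcompact {M : Type} [Mul M]
    (hnc : ∃ a b : M, a * b ≠ b * a)
    (hz : ∃ z : M, ∀ m : M, z * m = m * z) :
    ¬ QCompact (ℕ → M) := by
  obtain ⟨a, b, hab⟩ := hnc
  obtain ⟨z, hzc⟩ := hz
  have haz : a ≠ z := by
    rintro rfl
    exact hab (hzc b)
  intro hq
  set c : ℕ → ℕ → M := fun k i => if i = k then a else z with hc
  set E : ℕ → MagTerm (ℕ → M) 1 × MagTerm (ℕ → M) 1 :=
    fun k => (.mul (.var 0) (.const (c k)), .mul (.const (c k)) (.var 0)) with hE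
  set e : MagTerm (ℕ → M) 1 × MagTerm (ℕ → M) 1 :=
    (.mul (.var 0) (.const fun _ => a), .mul (.const fun _ => a) (.var 0)) with he
  have hsub : SolSet (Set.range E) ⊆ SolSet {e} := by
    intro v hv e' he'
    rcases he' with rfl
    show v 0 * (fun _ => a) = (fun _ => a) * v 0
    funext i
    have h := hv (E i) ⟨i, rfl⟩
    have h2 := congrFun h i
    simpa [hE, hc, MagTerm.eval] using h2
  obtain ⟨S', hS'sub, hfin, hS'⟩ := hq 1 (Set.range E) e hsub
  have hEinj : Function.Injective E := by
    intro j k hjk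
    by_contra hne
    have hcjk : c j = c k := by
      have := congrArg (fun p => p.1) hjk
      simp only [hE] at this
      injection this with _ h2
      injection h2
    have := congrFun hcjk j
    simp [hc, hne] at this
    exact haz this
  have hK : {k | E k ∈ S'}.Finite := by
    have : {k | E k ∈ S'} = E ⁻¹' S' := rfl
    rw [this]
    exact Set.Finite.preimage hEinj.injOn hfin
  obtain ⟨N, hN⟩ := (Set.Finite.infinite_compl hK).nonempty
  have hNn : E N ∉ S' := hN
  set v : Fin 1 → ℕ → M := fun _ i => if E i ∈ S' then z else b with hv
  have hvS' : v ∈ SolSet S' := by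
    intro p hp
    obtain ⟨k, rfl⟩ := hS'sub hp
    show v 0 * c k = c k * v 0
    funext i
    show v 0 i * c k i = c k i * v 0 i
    by_cases hik : i = k
    · subst hik
      simp only [hc, if_pos rfl, hv, if_pos hp]
      exact hzc a
    · simp only [hc, if_neg hik]
      exact (hzc _).symm
  have := hS' hvS' e rfl
  have h2 := congrFun this N
  simp only [he, MagTerm.eval, Pi.mul_apply, hv, if_neg hNn] at h2
  exact hab h2.symm
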